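/- Let S be a nonempty subset of [m] and V a nonzero finitely generated C^m_G-module. Then t_0^S(D_S V) = t_0^S(V) − 1, where D_S := ⊕_{i∈S} D_i. -/

import Mathlib

open CategoryTheory Limits
open scoped TensorProduct
noncomputable section

@[ext] structure FIObj where
  n : ℕ

instance : Category FIObj where
  Hom a b := Fin a.n ↪ Fin b.n
  id _ := Function.Embedding.refl _
  comp f g := f.trans g

@[ext] structure FImObj (m : ℕ) where
  comp : Fin m → ℕ

instance (m : ℕ) : Category (FImObj m) where
  Hom x y := ∀ j, Fin (x.comp j) ↪ Fin (y.comp j)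
  id _ := fun _ => Function.Embedding.refl _
  comp f g := fun j => (f j).trans (g j)

abbrev FImG (m : ℕ) (G : Type) [Group G] := FImObj m × CategoryTheory.SingleObj G

@[simp] lemma FImObj.comp_def {m : ℕ} {x y z : FImObj m} (f : x ⟶ y) (g : y ⟶ z) (j : Fin m) :
    (f ≫ g) j = (f j).trans (g j) := rfl

@[simp] lemma FImObj.id_def {m : ℕ} (x : FImObj m) (j : Fin m) :
    (𝟙 x : x ⟶ x) j = Function.Embedding.refl _ := rfl

def shiftEmb (K : ℕ) {a b : ℕ} (f : Fin a ↪ Fin b) : Fin (a + K) ↪ Fin (b + K) :=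
  finSumFinEquiv.symm.toEmbedding.trans
    ((f.sumMap (Function.Embedding.refl (Fin K))).trans finSumFinEquiv.toEmbedding)

@[simp] lemma shiftEmb_castAdd (K : ℕ) {a b : ℕ} (f : Fin a ↪ Fin b) (x : Fin a) :
    shiftEmb K f (Fin.castAdd K x) = Fin.castAdd K (f x) := by
  simp [shiftEmb]

lemma shiftEmb_id (K a : ℕ) :
    shiftEmb K (Function.Embedding.refl (Fin a)) = Function.Embedding.refl _ := by
  ext x
  obtain ⟨y, rfl⟩ := finSumFinEquiv.surjective x
  cases y <;> simp [shiftEmb]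

lemma shiftEmb_trans (K : ℕ) {a b c : ℕ} (f : Fin a ↪ Fin b) (g : Fin b ↪ Fin c) :
    shiftEmb K (f.trans g) = (shiftEmb K f).trans (shiftEmb K g) := by
  ext x
  obtain ⟨y, rfl⟩ := finSumFinEquiv.surjective x
  cases y <;> simp [shiftEmb]

def addF (m : ℕ) (e : Fin m → ℕ) : FImObj m ⥤ FImObj m where
  obj x := ⟨fun j => x.comp j + e j⟩
  map f := fun j => shiftEmb (e j) (f j)
  map_id x := funext fun j => shiftEmb_id _ _
  map_comp f g := funext fun j => shiftEmb_trans _ _ _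

variable (m : ℕ) (G : Type) [Group G] (k : Type) [Field k]

/-- The `i`-th self-embedding functor `ι_i` (more generally, the self-embedding functor
attached to a vector `e` of shifts), extended to `C^m_G` by the identity on `G`. -/
def addFG (e : Fin m → ℕ) : FImG m G ⥤ FImG m G := (addF m e).prod (𝟭 _)

/-- The category of `C^m_G`-modules over `k`, i.e. of functors `C^m_G ⥤ Vect_k`. -/
abbrev ModG := FImG m G ⥤ ModuleCat.{0} k

instance : HasFiniteBiproducts (ModG m G k) := Abelian.hasFiniteBiproducts

/-- The shift functor attached to a shift vector `e`, given by precomposition with the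
self-embedding functor; `Σ_i` is recovered as `e = Pi.single i 1`. -/
def sigmaF (e : Fin m → ℕ) : ModG m G k ⥤ ModG m G k :=
  (Functor.whiskeringLeft _ _ _).obj (addFG m G e)

/-- The canonical morphism `x ⟶ ι_e(x)` in `C^m_G`. -/
def incHom (e : Fin m → ℕ) (x : FImG m G) : x ⟶ (addFG m G e).obj x :=
  (fun j => ⟨Fin.castAdd (e j), fun u v huv => Fin.castAdd_injective _ _ huv⟩, (1 : G))

lemma incHom_naturality (e : Fin m → ℕ) {x y : FImG m G} (f : x ⟶ y) :
    incHom m G e x ≫ (addFG m G e).map f = f ≫ incHom m G e y := by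
  refine Prod.ext ?_ ?_
  · funext j
    ext t
    exact congrArg Fin.val (shiftEmb_castAdd (e j) (f.1 j) t)
  · simp [incHom, addFG, CategoryTheory.SingleObj.comp_as_mul]

/-- The natural inclusion `V ⟶ Σ_e V`. -/
def incMapV (e : Fin m → ℕ) (V : ModG m G k) : V ⟶ (sigmaF m G k e).obj V where
  app x := V.map (incHom m G e x)
  naturality x y f := by
    dsimp [sigmaF]
    rw [← V.map_comp, ← V.map_comp, incHom_naturality]

/-- The natural transformation `𝟭 ⟶ Σ_e` on the category of `C^m_G`-modules. -/
def incNat (e : Fin m → ℕ) : 𝟭 (ModG m G k) ⟶ sigmaF m G k e where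
  app V := incMapV m G k e V
  naturality V W φ := by
    apply NatTrans.ext; funext x
    exact (φ.naturality (incHom m G e x)).symm

/-- The kernel functor value `K_e V`, the kernel of the natural map `V ⟶ Σ_e V`;
the `i`-th kernel functor `K_i` of the paper is recovered with `e = Pi.single i 1`. -/
def Kobj (e : Fin m → ℕ) (V : ModG m G k) : ModG m G k :=
  kernel (incMapV m G k e V)

/-- The derivative functor `D_e`, sending `V` to the cokernel of `V ⟶ Σ_e V`;
the `i`-th derivative functor `D_i` of the paper is recovered with `e = Pi.single i 1`. -/
def Dfun (e : Fin m → ℕ) : ModG m G k ⥤ ModG m G k where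
  obj V := cokernel (incMapV m G k e V)
  map {V W} φ := cokernel.map _ _ φ ((sigmaF m G k e).map φ)
    ((incNat m G k e).naturality φ).symm
  map_id X := coequalizer.hom_ext (by simp [cokernel.map])
  map_comp f g := coequalizer.hom_ext (by simp [cokernel.map])

instance sigmaF_additive (e : Fin m → ℕ) : (sigmaF m G k e).Additive :=
  ⟨by intros; apply NatTrans.ext; funext x; rfl⟩

instance Dfun_pzm (e : Fin m → ℕ) : (Dfun m G k e).PreservesZeroMorphisms where
  map_zero X Y := coequalizer.hom_ext (by simp [Dfun, cokernel.map]; exact comp_zero.symm)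

/-- The functor `D_S = ⊕_{i ∈ S} D_i`. -/
def DSfun (S : Finset (Fin m)) : ModG m G k ⥤ ModG m G k where
  obj V := ⨁ (fun i : {i // i ∈ S} => (Dfun m G k (Pi.single i.1 1)).obj V)
  map φ := biproduct.map (fun i => (Dfun m G k (Pi.single i.1 1)).map φ)
  map_id X := by ext i; simp
  map_comp f g := by ext i; simp

instance DSfun_pzm (S : Finset (Fin m)) : (DSfun m G k S).PreservesZeroMorphisms where
  map_zero X Y := by
    apply biproduct.hom_ext
    intro i
    simp [DSfun]
    exact zero_comp.symm

/-- The `S`-degree of a morphism `α : x ⟶ y` in `C^m_G`: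
`deg_S(α) = ∑_{i ∈ S} (y_i − x_i)`. -/
def degS (S : Finset (Fin m)) {x y : FImG m G} (_ : x ⟶ y) : ℤ :=
  ∑ i ∈ S, ((y.1.comp i : ℤ) - (x.1.comp i : ℤ))

/-- An element `v ∈ V(x)` is `S`-torsion if some morphism `α` with `deg_S(α) > 0` and
`deg_{[m]∖S}(α) = 0` kills it. -/
def IsTorsionElt (S : Finset (Fin m)) (V : ModG m G k) {x : FImG m G} (v : V.obj x) : Prop :=
  ∃ (y : FImG m G) (α : x ⟶ y),
    0 < degS m G S α ∧ degS m G Sᶜ α = 0 ∧ V.map α v = 0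

/-- A `C^m_G`-module is `S`-torsion free if it has no nonzero `S`-torsion element. -/
def STorsionFree (S : Finset (Fin m)) (V : ModG m G k) : Prop :=
  ∀ (x : FImG m G) (v : V.obj x), IsTorsionElt m G k S V v → v = 0

/-- The free (projective) module `M(x)`, the `k`-linearization of the representable
functor at the object `x`. -/
def RepM (x : FImG m G) : ModG m G k :=
  coyoneda.obj (Opposite.op x) ⋙ ModuleCat.free k

/-- A `C^m_G`-module is finitely generated if it is a quotient of a finite direct sum
of linearizations of representable functors. -/
def FinitelyGenerated (V : ModG m G k) : Prop :=
  ∃ (r : ℕ) (xs : Fin r → FImG m G) (p : (⨁ fun a => RepM m G k (xs a)) ⟶ V), Epi p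

/-- The subcategory `R_s = Aut(s) × C^{[m]∖S}_G` of `C^m_G`, realized as the full
subcategory of objects whose `S`-coordinates agree with `s`. -/
def Rcat (S : Finset (Fin m)) (s : Fin m → ℕ) :=
  CategoryTheory.ObjectProperty.FullSubcategory (fun x : FImG m G => ∀ j ∈ S, x.1.comp j = s j)

instance (S : Finset (Fin m)) (s : Fin m → ℕ) : Category (Rcat m G S s) :=
  CategoryTheory.ObjectProperty.FullSubcategory.category _

/-- The inclusion `R_s ↪ C^m_G`. -/
def inclR (S : Finset (Fin m)) (s : Fin m → ℕ) : Rcat m G S s ⥤ FImG m G :=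
  ObjectProperty.ι _

set_option synthInstance.maxHeartbeats 1000000 in
instance hasLKE (S : Finset (Fin m)) (s : Fin m → ℕ) (F : Rcat m G S s ⥤ ModuleCat.{0} k) :
    (inclR m G S s).HasLeftKanExtension F := inferInstance

/-- The induction functor `F_s = M̄(s) ⊗_{R_s} −`, realized as the left Kan extension
along the inclusion `R_s ↪ C^m_G`. -/
def indF (S : Finset (Fin m)) (s : Fin m → ℕ) :
    (Rcat m G S s ⥤ ModuleCat.{0} k) ⥤ ModG m G k :=
  (inclR m G S s).lan

/-- A module is `S`-induced if it is isomorphic to `F_s(W)` for some object `s` of `C^S`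
and some `R_s`-module `W`. -/
def IsInduced (S : Finset (Fin m)) (V : ModG m G k) : Prop :=
  ∃ (s : Fin m → ℕ) (W : Rcat m G S s ⥤ ModuleCat.{0} k),
    Nonempty (V ≅ (indF m G k S s).obj W)

/-- A module is `S`-semi-induced if it has a finite filtration whose successive quotients
are `S`-induced; equivalently (inductively): a zero module is `S`-semi-induced, and any
extension of an `S`-induced module by an `S`-semi-induced module is `S`-semi-induced. -/
inductive IsSemiInduced (S : Finset (Fin m)) : ModG m G k → Prop
  | of_isZero (V : ModG m G k) : Limits.IsZero V → IsSemiInduced S V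
  | step (sc : ShortComplex (ModG m G k)) : sc.ShortExact → IsSemiInduced S sc.X₁ →
      IsInduced m G k S sc.X₃ → IsSemiInduced S sc.X₂

/-- `V` is generated by its slice `V[[s]]` iff the counit `F_s(V[[s]]) ⟶ V` of the
Kan-extension adjunction (induction ⊣ restriction) is an epimorphism. -/
def GeneratedBySlice (S : Finset (Fin m)) (s : Fin m → ℕ) (V : ModG m G k) : Prop :=
  Epi ((((inclR m G S s).lanAdjunction (ModuleCat.{0} k)).counit).app V)

lemma comp_le_of_hom {x y : FImG m G} (f : x ⟶ y) (i : Fin m) :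
    x.1.comp i ≤ y.1.comp i := by
  simpa using Fintype.card_le_of_embedding (f.1 i)

lemma degS_nonneg (S : Finset (Fin m)) {x y : FImG m G} (f : x ⟶ y) :
    0 ≤ degS m G S f := by
  refine Finset.sum_nonneg fun i _ => ?_
  have := comp_le_of_hom m G f i
  omega

lemma degS_comp (S : Finset (Fin m)) {x y z : FImG m G} (f : x ⟶ y) (g : y ⟶ z) :
    degS m G S (f ≫ g) = degS m G S f + degS m G S g := by
  rw [degS, degS, degS, ← Finset.sum_add_distrib]
  exact Finset.sum_congr rfl fun i _ => by ring

/-- The value at `x` of the submodule `𝔍_S V ⊆ V`, where `𝔍_S` is the two-sided ideal of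
the category algebra spanned by all morphisms of positive `S`-degree. -/
def Jsub (S : Finset (Fin m)) (V : ModG m G k) (x : FImG m G) : Submodule k (V.obj x) :=
  ⨆ (y : FImG m G) (α : y ⟶ x) (_ : 0 < degS m G S α), LinearMap.range (V.map α).hom

lemma Jsub_le_comap (S : Finset (Fin m)) (V : ModG m G k) {x x' : FImG m G} (f : x ⟶ x') :
    Jsub m G k S V x ≤ (Jsub m G k S V x').comap (V.map f).hom := by
  refine iSup_le fun y => iSup_le fun α => iSup_le fun hα => ?_
  rintro v ⟨w, rfl⟩
  have h1 : (V.map f).hom ((V.map α).hom w) = (V.map (α ≫ f)).hom w := by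
    rw [V.map_comp]; rfl
  have h2 : 0 < degS m G S (α ≫ f) := by
    rw [degS_comp]
    have := degS_nonneg m G S f
    omega
  refine Submodule.mem_comap.2 ?_
  rw [h1]
  exact Submodule.mem_iSup_of_mem y (Submodule.mem_iSup_of_mem (α ≫ f)
    (Submodule.mem_iSup_of_mem h2 ⟨w, rfl⟩))

lemma Jsub_le_comap_app (S : Finset (Fin m)) {V W : ModG m G k} (φ : V ⟶ W) (x : FImG m G) :
    Jsub m G k S V x ≤ (Jsub m G k S W x).comap (φ.app x).hom := by
  refine iSup_le fun y => iSup_le fun α => iSup_le fun hα => ?_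
  rintro v ⟨w, rfl⟩
  have h1 : (φ.app x).hom ((V.map α).hom w) = (W.map α).hom ((φ.app y).hom w) := by
    have := φ.naturality α
    exact congrFun (congrArg (fun (t : V.obj y ⟶ W.obj x) => ⇑t.hom) this) w
  refine Submodule.mem_comap.2 ?_
  rw [h1]
  exact Submodule.mem_iSup_of_mem y (Submodule.mem_iSup_of_mem α
    (Submodule.mem_iSup_of_mem hα ⟨_, rfl⟩))

/-- The value of `H_0^S(V) = V/𝔍_S V` as a `C^m_G`-module. -/
def H0Sobj (S : Finset (Fin m)) (V : ModG m G k) : ModG m G k where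
  obj x := ModuleCat.of k (V.obj x ⧸ Jsub m G k S V x)
  map {x x'} f := ModuleCat.ofHom (Submodule.mapQ _ _ (V.map f).hom (Jsub_le_comap m G k S V f))
  map_id x := by
    apply ModuleCat.hom_ext
    apply Submodule.linearMap_qext
    ext v
    show Submodule.Quotient.mk ((V.map (𝟙 x)).hom v) = Submodule.Quotient.mk v
    rw [V.map_id]
    rfl
  map_comp {x y z} f g := by
    apply ModuleCat.hom_ext
    apply Submodule.linearMap_qext
    ext v
    show Submodule.Quotient.mk ((V.map (f ≫ g)).hom v)
      = Submodule.Quotient.mk ((V.map g).hom ((V.map f).hom v))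
    rw [V.map_comp]
    rfl

/-- The functor `H_0^S`, sending `V` to `V/𝔍_S V`. -/
def H0S (S : Finset (Fin m)) : ModG m G k ⥤ ModG m G k where
  obj V := H0Sobj m G k S V
  map {V W} φ :=
    { app := fun x => ModuleCat.ofHom (Submodule.mapQ _ _ (φ.app x).hom (Jsub_le_comap_app m G k S φ x))
      naturality := fun x y f => by
        apply ModuleCat.hom_ext
        apply Submodule.linearMap_qext
        ext v
        have := φ.naturality f
        have h1 : (φ.app y).hom ((V.map f).hom v) = (W.map f).hom ((φ.app x).hom v) :=
          congrFun (congrArg (fun (t : V.obj x ⟶ W.obj y) => ⇑t.hom) this) v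
        show Submodule.Quotient.mk ((φ.app y).hom ((V.map f).hom v))
          = Submodule.Quotient.mk ((W.map f).hom ((φ.app x).hom v))
        rw [h1] }
  map_id V := by
    apply NatTrans.ext; funext x
    apply ModuleCat.hom_ext
    apply Submodule.linearMap_qext
    ext v
    rfl
  map_comp {U V W} φ ψ := by
    apply NatTrans.ext; funext x
    apply ModuleCat.hom_ext
    apply Submodule.linearMap_qext
    ext v
    rfl

instance (S : Finset (Fin m)) : (H0S m G k S).Additive where
  map_add := by
    intro V W φ ψ
    apply NatTrans.ext; funext x
    apply ModuleCat.hom_ext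
    apply Submodule.linearMap_qext
    ext v
    rfl

/-- The free module `M(x) ⊗ W` on a vector space `W` placed at the object `x`. -/
def freeAt (x : FImG m G) (W : ModuleCat.{0} k) : ModG m G k where
  obj y := ModuleCat.of k ((x ⟶ y) →₀ W)
  map {y z} g := ModuleCat.ofHom (Finsupp.lmapDomain W k (fun α => α ≫ g))
  map_id y := by
    have h : (fun α : x ⟶ y => α ≫ 𝟙 y) = id := funext fun α => Category.comp_id α
    apply ModuleCat.hom_ext
    show Finsupp.lmapDomain W k (fun α : x ⟶ y => α ≫ 𝟙 y) = _
    rw [h, Finsupp.lmapDomain_id]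
    rfl
  map_comp {y z w} g h := by
    have hc : (fun α : x ⟶ y => α ≫ (g ≫ h)) = (fun β : x ⟶ z => β ≫ h) ∘ (fun α : x ⟶ y => α ≫ g) :=
      funext fun α => (Category.assoc α g h).symm
    apply ModuleCat.hom_ext
    show Finsupp.lmapDomain W k (fun α : x ⟶ y => α ≫ (g ≫ h)) = _
    rw [hc, Finsupp.lmapDomain_comp]
    rfl

/-- The universal property map out of `freeAt x W`. -/
def fromFree {x : FImG m G} {W : ModuleCat.{0} k} {N : ModG m G k} (φ : W →ₗ[k] N.obj x) :
    freeAt m G k x W ⟶ N where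
  app y := ModuleCat.ofHom (Finsupp.lsum k (fun α : x ⟶ y => (N.map α).hom.comp φ))
  naturality {y z} g := by
    apply ModuleCat.hom_ext
    apply Finsupp.lhom_ext
    intro α w
    show Finsupp.lsum k (fun β : x ⟶ z => (N.map β).hom.comp φ)
        (Finsupp.mapDomain (fun β => β ≫ g) (Finsupp.single α w))
      = (N.map g).hom ((Finsupp.lsum k (fun β : x ⟶ y => (N.map β).hom.comp φ)) (Finsupp.single α w))
    rw [Finsupp.mapDomain_single]
    simp only [Finsupp.lsum_single, LinearMap.comp_apply]
    rw [N.map_comp]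
    rfl

instance freeAt_projective (x : FImG m G) (W : ModuleCat.{0} k) :
    Projective (freeAt m G k x W) where
  factors {E X} f e he := by
    haveI : Module.Free k W := Module.Free.of_divisionRing k W
    haveI : Module.Projective k W := Module.Projective.of_free
    have hsurj : Function.Surjective (e.app x).hom :=
      (ModuleCat.epi_iff_surjective (e.app x)).1 inferInstance
    obtain ⟨φ, hφ⟩ := Module.projective_lifting_property (e.app x).hom
      ((f.app x).hom.comp (Finsupp.lsingle (𝟙 x))) hsurj
    refine ⟨fromFree m G k φ, ?_⟩
    apply NatTrans.ext; funext y
    apply ModuleCat.hom_ext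
    apply Finsupp.lhom_ext
    intro α w
    show (e.app y).hom ((Finsupp.lsum k (fun β : x ⟶ y => (E.map β).hom.comp φ)) (Finsupp.single α w))
      = (f.app y).hom (Finsupp.single α w)
    rw [Finsupp.lsum_single, LinearMap.comp_apply]
    have h1 : (e.app y).hom ((E.map α).hom (φ w)) = (X.map α).hom ((e.app x).hom (φ w)) :=
      congrFun (congrArg (fun (t : E.obj x ⟶ X.obj y) => ⇑t.hom) (e.naturality α)) (φ w)
    have h2 : (e.app x).hom (φ w) = (f.app x).hom (Finsupp.single (𝟙 x) w) :=
      congrFun (congrArg (fun (t : W →ₗ[k] X.obj x) => ⇑t) hφ) w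
    have h3 : (X.map α).hom ((f.app x).hom (Finsupp.single (𝟙 x) w))
        = (f.app y).hom (((freeAt m G k x W).map α).hom (Finsupp.single (𝟙 x) w)) :=
      (congrFun (congrArg (fun (t : (freeAt m G k x W).obj x ⟶ X.obj y) => ⇑t.hom)
        (f.naturality α)) (Finsupp.single (𝟙 x) w)).symm
    have h4 : ((freeAt m G k x W).map α).hom (Finsupp.single (𝟙 x) w) = Finsupp.single α w := by
      show Finsupp.mapDomain (fun β : x ⟶ x => β ≫ α) (Finsupp.single (𝟙 x) w)
        = Finsupp.single α w
      rw [Finsupp.mapDomain_single, Category.id_comp]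
    rw [h1, h2, h3, h4]

lemma projective_sigma {J : Type} (f : J → ModG m G k) [HasCoproduct f]
    (h : ∀ j, Projective (f j)) : Projective (∐ f) where
  factors {E X} g e he := by
    refine ⟨Sigma.desc fun j => (h j).factors (Sigma.ι f j ≫ g) e |>.choose, ?_⟩
    apply Sigma.hom_ext
    intro j
    rw [← Category.assoc, colimit.ι_desc]
    exact ((h j).factors (Sigma.ι f j ≫ g) e).choose_spec

/-- The canonical projective cover `⊕_x M(x) ⊗ V(x) ⟶ V`. -/
def coverHom (V : ModG m G k) : (∐ fun x : FImG m G => freeAt m G k x (V.obj x)) ⟶ V :=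
  Sigma.desc fun x => fromFree m G k LinearMap.id

instance coverHom_epi (V : ModG m G k) : Epi (coverHom m G k V) := by
  haveI : ∀ y : FImG m G, Epi ((coverHom m G k V).app y) := by
    intro y
    rw [ModuleCat.epi_iff_surjective]
    intro v
    refine ⟨((Sigma.ι (fun x : FImG m G => freeAt m G k x (V.obj x)) y).app y).hom
      (Finsupp.single (𝟙 y) v), ?_⟩
    have h1 : Sigma.ι (fun x : FImG m G => freeAt m G k x (V.obj x)) y ≫ coverHom m G k V
        = fromFree m G k LinearMap.id := colimit.ι_desc _ _
    have h2 := congrFun (congrArg (fun (t : freeAt m G k y (V.obj y) ⟶ V) => ⇑(t.app y).hom) h1)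
      (Finsupp.single (𝟙 y) v)
    refine Eq.trans ?_ (h2.trans ?_)
    · rfl
    · show (Finsupp.lsum k (fun α : y ⟶ y => (V.map α).hom.comp LinearMap.id)) (Finsupp.single (𝟙 y) v) = v
      rw [Finsupp.lsum_single, LinearMap.comp_apply, LinearMap.id_apply, V.map_id]
      rfl
  exact NatTrans.epi_of_epi_app _

instance : EnoughProjectives (ModG m G k) where
  presentation V := ⟨{
    p := ∐ fun x : FImG m G => freeAt m G k x (V.obj x)
    projective := projective_sigma m G k _ fun x => freeAt_projective m G k x (V.obj x)
    f := coverHom m G k V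
    epi := coverHom_epi m G k V }⟩

/-- The `i`-th `S`-homology functor `H_i^S`, the `i`-th left derived functor of `H_0^S`. -/
def HiS (S : Finset (Fin m)) (i : ℕ) : ModG m G k ⥤ ModG m G k :=
  (H0S m G k S).leftDerived i

/-- The slice `W[[s]]` of a module on the object `s` of `C^S` is nonzero. -/
def SliceNonzero (S : Finset (Fin m)) (W : ModG m G k) (s : Fin m → ℕ) : Prop :=
  ∃ x : FImG m G, (∀ j ∈ S, x.1.comp j = s j) ∧ Nontrivial (W.obj x)

/-- The `i`-th `S`-homological degree `t_i^S(V)`, the supremum of the `S`-degrees of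
objects `s` of `C^S` with `H_i^S(V)[[s]] ≠ 0` (with `⊥` playing the role of `−1` when
there is no such object). -/
def tS (S : Finset (Fin m)) (i : ℕ) (V : ModG m G k) : WithBot ℕ∞ :=
  sSup ((fun s : Fin m → ℕ => (((∑ j ∈ S, s j : ℕ) : ℕ∞) : WithBot ℕ∞)) ''
    {s | SliceNonzero m G k S ((HiS m G k S i).obj V) s})

/-! ### Plain `C^m`-modules (no group factor) -/

/-- The category of `C^m`-modules over `k`. -/
abbrev ModM := FImObj m ⥤ ModuleCat.{0} k

instance : HasFiniteBiproducts (ModM m k) := Abelian.hasFiniteBiproducts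

/-- The category of `C`-modules (`FI`-modules) over `k`. -/
abbrev ModC := FIObj ⥤ ModuleCat.{0} k

instance : HasFiniteBiproducts (ModC k) := Abelian.hasFiniteBiproducts

/-- The shift functor `Σ_e` on `C^m`-modules. -/
def sigmaFM (e : Fin m → ℕ) : ModM m k ⥤ ModM m k :=
  (Functor.whiskeringLeft _ _ _).obj (addF m e)

/-- The canonical inclusion `x ⟶ ι_e(x)` in `C^m`. -/
def incHomM (e : Fin m → ℕ) (x : FImObj m) : x ⟶ (addF m e).obj x :=
  fun j => ⟨Fin.castAdd (e j), fun u v huv => Fin.castAdd_injective _ _ huv⟩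

lemma incHomM_naturality (e : Fin m → ℕ) {x y : FImObj m} (f : x ⟶ y) :
    incHomM m e x ≫ (addF m e).map f = f ≫ incHomM m e y := by
  funext j
  ext t
  exact congrArg Fin.val (shiftEmb_castAdd (e j) (f j) t)

/-- The natural inclusion `V ⟶ Σ_e V` for a `C^m`-module `V`. -/
def incMapVM (e : Fin m → ℕ) (V : ModM m k) : V ⟶ (sigmaFM m k e).obj V where
  app x := V.map (incHomM m e x)
  naturality x y f := by
    dsimp [sigmaFM]
    rw [← V.map_comp, ← V.map_comp, incHomM_naturality]

/-- The derivative `D_e V`, the cokernel of `V ⟶ Σ_e V`, for a `C^m`-module `V`. -/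
def DobjM (e : Fin m → ℕ) (V : ModM m k) : ModM m k :=
  cokernel (incMapVM m k e V)

/-- The free `C^m`-module `M(x)` at the object `x`. -/
def RepMM (x : FImObj m) : ModM m k :=
  coyoneda.obj (Opposite.op x) ⋙ ModuleCat.free k

/-- Finite generation for `C^m`-modules. -/
def FinitelyGeneratedM (V : ModM m k) : Prop :=
  ∃ (r : ℕ) (xs : Fin r → FImObj m) (p : (⨁ fun a => RepMM m k (xs a)) ⟶ V), Epi p

/-- The free `C`-module `M(x)` at an object `x` of `FI`. -/
def RepMC (x : FIObj) : ModC k :=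
  coyoneda.obj (Opposite.op x) ⋙ ModuleCat.free k

/-- Finite generation for `C`-modules. -/
def FinitelyGeneratedC (V : ModC k) : Prop :=
  ∃ (r : ℕ) (xs : Fin r → FIObj) (p : (⨁ fun a => RepMC k (xs a)) ⟶ V), Epi p

/-- The external tensor product `I₁ ⊠ ⋯ ⊠ I_m` of `C`-modules, a `C^m`-module. -/
def extProd (I : Fin m → ModC k) : ModM m k where
  obj x := ModuleCat.of k (⨂[k] j, (I j).obj ⟨x.comp j⟩)
  map {x y} f := ModuleCat.ofHom (PiTensorProduct.map (fun j => ((I j).map (f j)).hom))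
  map_id x := by
    have h : (fun j => ((I j).map ((𝟙 x : x ⟶ x) j)).hom) = fun j => LinearMap.id := by
      funext j
      show ((I j).map (𝟙 (⟨x.comp j⟩ : FIObj))).hom = LinearMap.id
      rw [(I j).map_id]
      rfl
    apply ModuleCat.hom_ext
    show PiTensorProduct.map (fun j => ((I j).map ((𝟙 x : x ⟶ x) j)).hom) = _
    rw [h, PiTensorProduct.map_id]
    rfl
  map_comp {x y z} f g := by
    have h : (fun j => ((I j).map ((f ≫ g) j)).hom)
        = fun j => ((I j).map (g j)).hom.comp ((I j).map (f j)).hom := by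
      funext j
      show ((I j).map ((f j : (⟨x.comp j⟩ : FIObj) ⟶ ⟨y.comp j⟩) ≫ (g j))).hom = _
      rw [(I j).map_comp]
      rfl
    apply ModuleCat.hom_ext
    show PiTensorProduct.map (fun j => ((I j).map ((f ≫ g) j)).hom) = _
    rw [h, PiTensorProduct.map_comp]
    rfl

/-- The `C^m_G`-module `V ⊠ kG`, where `kG` carries the (left regular) `G`-action. -/
def tensorG (V : ModM m k) : ModG m G k where
  obj x := ModuleCat.of k (TensorProduct k (V.obj x.1) (G →₀ k))
  map {x y} f := ModuleCat.ofHom (TensorProduct.map (V.map f.1).hom (Finsupp.lmapDomain k k (f.2 • ·)))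
  map_id x := by
    have h1 : (V.map (𝟙 x.1)).hom = LinearMap.id := by rw [V.map_id]; rfl
    have h2 : Finsupp.lmapDomain k k (fun h : G => (1 : G) • h) = LinearMap.id := by
      ext a b; simp
    apply ModuleCat.hom_ext
    show TensorProduct.map (V.map (𝟙 x.1)).hom (Finsupp.lmapDomain k k (fun h : G => (1 : G) • h)) = _
    rw [h1, h2, TensorProduct.map_id]
    rfl
  map_comp {x y z} f g := by
    have h1 : (V.map ((f ≫ g).1)).hom = (V.map g.1).hom.comp (V.map f.1).hom := by
      rw [show (f ≫ g).1 = f.1 ≫ g.1 from rfl, V.map_comp]; rfl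
    have h2 : Finsupp.lmapDomain k k (fun h : G => ((f ≫ g).2 : G) • h)
        = (Finsupp.lmapDomain k k (fun h : G => (g.2 : G) • h)).comp
          (Finsupp.lmapDomain k k (fun h : G => (f.2 : G) • h)) := by
      show Finsupp.lmapDomain k k (fun h : G => ((g.2 : G) * f.2) • h) = _
      ext a b; simp [mul_assoc]
    apply ModuleCat.hom_ext
    show TensorProduct.map (V.map ((f ≫ g).1)).hom (Finsupp.lmapDomain k k (fun h : G => ((f ≫ g).2 : G) • h)) = _
    rw [h1, h2, TensorProduct.map_comp]
    rfl

end

open CategoryTheory Limits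

section Aux
variable (m : ℕ) (G : Type) [Group G] (k : Type) [Field k]

-- Nontrivial of H0S pointwise
lemma h0s_nontrivial_iff (S : Finset (Fin m)) (V : ModG m G k) (x : FImG m G) :
    Nontrivial (((H0S m G k S).obj V).obj x) ↔ Jsub m G k S V x ≠ ⊤ := by
  show Nontrivial (V.obj x ⧸ Jsub m G k S V x) ↔ _
  rw [← not_subsingleton_iff_nontrivial, Submodule.Quotient.subsingleton_iff]

-- L1: the cokernel projection, pointwise
lemma cokernel_pi_app_spec {A B : ModG m G k} (ψ : A ⟶ B) (x : FImG m G) :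
    Function.Surjective ((cokernel.π ψ).app x).hom ∧
      LinearMap.ker ((cokernel.π ψ).app x).hom = LinearMap.range (ψ.app x).hom := by
  set E := (evaluation (FImG m G) (ModuleCat.{0} k)).obj x with hE
  have h1 : cokernel.π (E.map ψ) ≫ (PreservesCokernel.iso E ψ).inv = E.map (cokernel.π ψ) := by
    rw [PreservesCokernel.iso_inv]; exact π_comp_cokernelComparison _ _
  set T : (cokernel ψ).obj x ⟶ ModuleCat.of k (B.obj x ⧸ LinearMap.range (ψ.app x).hom) :=
    (PreservesCokernel.iso E ψ).hom ≫ (ModuleCat.cokernelIsoRangeQuotient (E.map ψ)).hom with hT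
  have h2 : E.map (cokernel.π ψ) ≫ T = ModuleCat.ofHom (LinearMap.range (ψ.app x).hom).mkQ := by
    rw [hT, ← h1, Category.assoc, Iso.inv_hom_id_assoc]
    exact ModuleCat.cokernel_π_cokernelIsoRangeQuotient_hom _
  have hTinj : Function.Injective T.hom := (ModuleCat.mono_iff_injective T).1 inferInstance
  have hTsurj : Function.Surjective T.hom := (ModuleCat.epi_iff_surjective T).1 inferInstance
  have h2' : ∀ v : B.obj x, T.hom (((cokernel.π ψ).app x).hom v)
      = Submodule.Quotient.mk v := by
    intro v
    exact congrFun (congrArg (fun (t : B.obj x ⟶ _) => ⇑t.hom) h2) v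
  constructor
  · intro b
    obtain ⟨v, hv⟩ := (LinearMap.range (ψ.app x).hom).mkQ_surjective (T.hom b)
    exact ⟨v, hTinj (by rw [h2' v]; exact hv)⟩
  · ext w
    simp only [LinearMap.mem_ker]
    constructor
    · intro h
      have : Submodule.Quotient.mk w
          = (0 : B.obj x ⧸ LinearMap.range (ψ.app x).hom) := by
        rw [← h2' w, h, map_zero]
      exact (Submodule.Quotient.mk_eq_zero _).1 this
    · intro hw
      refine hTinj ?_
      rw [h2' w, map_zero, Submodule.Quotient.mk_eq_zero]
      exact hw

-- L2: Jsub of a cokernel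
lemma jsub_cokernel (S : Finset (Fin m)) {A B : ModG m G k} (ψ : A ⟶ B) (x : FImG m G) :
    Jsub m G k S (cokernel ψ) x
      = Submodule.map ((cokernel.π ψ).app x).hom (Jsub m G k S B x) := by
  rw [Jsub, Jsub]
  rw [Submodule.map_iSup]
  refine iSup_congr fun y => ?_
  rw [Submodule.map_iSup]
  refine iSup_congr fun α => ?_
  rw [Submodule.map_iSup]
  refine iSup_congr fun hα => ?_
  have hnat : ∀ v, ((cokernel.π ψ).app x).hom ((B.map α).hom v)
      = ((cokernel ψ).map α).hom (((cokernel.π ψ).app y).hom v) := fun v =>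
    congrFun (congrArg (fun (t : B.obj y ⟶ (cokernel ψ).obj x) => ⇑t.hom)
      ((cokernel.π ψ).naturality α)) v
  have hsurj := (cokernel_pi_app_spec m G k ψ y).1
  ext b
  simp only [Submodule.mem_map, LinearMap.mem_range]
  constructor
  · intro h
    obtain ⟨c, rfl⟩ := h
    obtain ⟨v, rfl⟩ := hsurj c
    exact ⟨(B.map α).hom v, ⟨v, rfl⟩, hnat v⟩
  · intro h
    obtain ⟨c, hc, rfl⟩ := h
    obtain ⟨u, rfl⟩ := hc
    exact ⟨((cokernel.π ψ).app y).hom u, (hnat u).symm⟩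

end Aux

open CategoryTheory Limits

section Aux2
variable (m : ℕ) (G : Type) [Group G] (k : Type) [Field k]

lemma shiftEmb_val_lt {K a b : ℕ} (f : Fin a ↪ Fin b) (u : Fin (a + K)) (h : u.val < a) :
    (shiftEmb K f u).val = (f ⟨u.val, h⟩).val := by
  have hu : u = Fin.castAdd K ⟨u.val, h⟩ := Fin.ext rfl
  conv_lhs => rw [hu, shiftEmb_castAdd]
  rfl

lemma shiftEmb_natAdd {K a b : ℕ} (f : Fin a ↪ Fin b) (w : Fin K) :
    shiftEmb K f (Fin.natAdd a w) = Fin.natAdd b w := by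
  simp [shiftEmb]

lemma shiftEmb_val_ge {K a b : ℕ} (f : Fin a ↪ Fin b) (u : Fin (a + K)) (h : a ≤ u.val) :
    (shiftEmb K f u).val = b + (u.val - a) := by
  have hu : u = Fin.natAdd a ⟨u.val - a, by have := u.isLt; omega⟩ := Fin.ext (by simp; omega)
  conv_lhs => rw [hu, shiftEmb_natAdd]
  rfl

lemma addFG_obj_comp (e : Fin m → ℕ) (x : FImG m G) (j : Fin m) :
    ((addFG m G e).obj x).1.comp j = x.1.comp j + e j := rfl

lemma degS_incHom (S : Finset (Fin m)) (i : Fin m) (hi : i ∈ S) (x : FImG m G) :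
    degS m G S (incHom m G (Pi.single i 1) x) = 1 := by
  rw [degS, Finset.sum_eq_single_of_mem i hi]
  · rw [addFG_obj_comp, Pi.single_eq_same]; push_cast; ring
  · intro j _ hj
    rw [addFG_obj_comp, Pi.single_eq_of_ne hj]; push_cast; ring

lemma degS_addFG_map (S : Finset (Fin m)) (e : Fin m → ℕ) {z x : FImG m G} (α : z ⟶ x) :
    degS m G S ((addFG m G e).map α) = degS m G S α := by
  refine Finset.sum_congr rfl fun j _ => ?_
  rw [addFG_obj_comp, addFG_obj_comp]
  push_cast; ring

lemma sigmaF_obj_map (e : Fin m → ℕ) (V : ModG m G k) {z x : FImG m G} (α : z ⟶ x) :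
    ((sigmaF m G k e).obj V).map α = V.map ((addFG m G e).map α) := rfl

-- the key combinatorial identification
lemma jsub_shift (S : Finset (Fin m)) (i : Fin m) (hi : i ∈ S) (V : ModG m G k)
    (x : FImG m G) :
    Jsub m G k S V ((addFG m G (Pi.single i 1)).obj x)
      = LinearMap.range (V.map (incHom m G (Pi.single i 1) x)).hom
        ⊔ Jsub m G k S ((sigmaF m G k (Pi.single i 1)).obj V) x := by
  have hsi : Pi.single (M := fun _ : Fin m => ℕ) i 1 i = 1 := Pi.single_eq_same i 1
  have hsj : ∀ j : Fin m, j ≠ i → Pi.single (M := fun _ : Fin m => ℕ) i 1 j = 0 :=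
    fun j hj => Pi.single_eq_of_ne hj 1
  apply le_antisymm
  · -- hard direction
    refine iSup_le fun z => iSup_le fun β => iSup_le fun hβ => ?_
    by_cases hc : ∃ p : Fin (z.1.comp i), (β.1 i p).val = x.1.comp i
    · -- case B : the new point is hit
      obtain ⟨p, hp⟩ := hc
      have hz : 1 ≤ z.1.comp i := by have := p.isLt; omega
      have hpval : p.val < z.1.comp i := p.isLt
      -- the value swap
      set σ : ℕ → ℕ := fun t =>
        if t = p.val then z.1.comp i - 1 else if t = z.1.comp i - 1 then p.val else t with hσ
      have σdef : ∀ t, σ t = if t = p.val then z.1.comp i - 1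
          else if t = z.1.comp i - 1 then p.val else t := fun _ => rfl
      have σinvol : ∀ t, σ (σ t) = t := by
        intro t
        rw [σdef, σdef]
        split_ifs <;> omega
      have σlt : ∀ t, t < z.1.comp i → σ t < z.1.comp i := by
        intro t ht
        rw [σdef]
        split_ifs <;> omega
      have σinj : ∀ s t, σ s = σ t → s = t := by
        intro s t hst
        rw [σdef, σdef] at hst
        split_ifs at hst <;> omega
      have σlast : ∀ t, t < z.1.comp i → (σ t = z.1.comp i - 1 ↔ t = p.val) := by
        intro t ht
        rw [σdef]
        split_ifs <;> omega
      set z' : FImObj m := ⟨fun j => z.1.comp j - (Pi.single i 1 : Fin m → ℕ) j⟩ with hz'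
      have hz'c : ∀ j, z'.comp j = z.1.comp j - (Pi.single i 1 : Fin m → ℕ) j := fun _ => rfl
      have hz'i : z'.comp i = z.1.comp i - 1 := by rw [hz'c, hsi]
      have hz'j : ∀ j, j ≠ i → z'.comp j = z.1.comp j := by
        intro j hj; rw [hz'c, hsj j hj]; omega
      -- fc : source adjustment Fin (z'.comp j) → Fin (z.1.comp j)
      have fcbnd : ∀ (j : Fin m) (v : Fin (z'.comp j)),
          (if j = i then σ v.val else v.val) < z.1.comp j := by
        intro j v
        have h2 := v.isLt
        by_cases hji : j = i
        · rw [if_pos hji]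
          subst hji
          exact σlt v.val (by omega)
        · rw [if_neg hji]
          have h3 := hz'j j hji
          omega
      set fc : ∀ j : Fin m, Fin (z'.comp j) → Fin (z.1.comp j) := fun j v =>
        ⟨if j = i then σ v.val else v.val, fcbnd j v⟩ with hfc
      have fcval : ∀ (j : Fin m) (v : Fin (z'.comp j)),
          (fc j v).val = if j = i then σ v.val else v.val := fun _ _ => rfl
      have fc_inj : ∀ j, Function.Injective (fc j) := by
        intro j a b hab
        have h5 : (fc j a).val = (fc j b).val := congrArg Fin.val hab
        rw [fcval, fcval] at h5
        by_cases hji : j = i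
        · rw [if_pos hji, if_pos hji] at h5
          exact Fin.ext (σinj _ _ h5)
        · rw [if_neg hji, if_neg hji] at h5
          exact Fin.ext h5
      have fci_ne_p : ∀ v : Fin (z'.comp i), (fc i v).val ≠ p.val := by
        intro v hvp
        rw [fcval, if_pos rfl] at hvp
        have h2 := v.isLt
        have h3 : σ v.val = σ (σ p.val) := by rw [σinvol, hvp]
        have h4 := σinj _ _ h3
        have h5 : σ p.val = z.1.comp i - 1 := by rw [σdef]; rw [if_pos rfl]
        omega
      have gbnd : ∀ (j : Fin m) (v : Fin (z'.comp j)),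
          (β.1 j (fc j v)).val < x.1.comp j := by
        intro j v
        have h7 := (β.1 j (fc j v)).isLt
        have h8 := addFG_obj_comp m G (Pi.single i 1) x j
        by_cases hji : j = i
        · subst hji
          have h9 : (β.1 j (fc j v)).val ≠ x.1.comp j := by
            intro hval
            have h10 : β.1 j (fc j v) = β.1 j p := Fin.ext (hval.trans hp.symm)
            have h11 := (β.1 j).injective h10
            exact fci_ne_p v (congrArg Fin.val h11)
          have := hsi
          omega
        · have := hsj j hji
          omega
      set γ1 : ∀ j : Fin m, Fin (z'.comp j) ↪ Fin (x.1.comp j) := fun j =>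
        ⟨fun v => ⟨(β.1 j (fc j v)).val, gbnd j v⟩, by
          intro a b hab
          have h5 := congrArg Fin.val hab
          simp only [] at h5
          have h10 : β.1 j (fc j a) = β.1 j (fc j b) := Fin.ext h5
          exact fc_inj j ((β.1 j).injective h10)⟩ with hγ1
      have γ1val : ∀ (j : Fin m) (v : Fin (z'.comp j)),
          (γ1 j v).val = (β.1 j (fc j v)).val := fun _ _ => rfl
      set γ : ((z', z.2) : FImG m G) ⟶ x := (γ1, β.2) with hγ
      -- δ : z ⟶ (addFG e).obj (z', z.2)
      have dbnd : ∀ (j : Fin m) (v : Fin (z.1.comp j)),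
          (if j = i then σ v.val else v.val) < z'.comp j + (Pi.single i 1 : Fin m → ℕ) j := by
        intro j v
        have h2 := v.isLt
        by_cases hji : j = i
        · rw [if_pos hji]
          subst hji
          have h3 := σlt v.val h2
          rw [hz'i, hsi]
          omega
        · rw [if_neg hji, hz'j j hji, hsj j hji]
          omega
      set δ1 : ∀ j : Fin m, Fin (z.1.comp j) ↪ Fin (z'.comp j + (Pi.single i 1 : Fin m → ℕ) j) := fun j =>
        ⟨fun v => ⟨if j = i then σ v.val else v.val, dbnd j v⟩, by
          intro a b hab
          have h5 := congrArg Fin.val hab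
          simp only [] at h5
          by_cases hji : j = i
          · rw [if_pos hji, if_pos hji] at h5
            exact Fin.ext (σinj _ _ h5)
          · rw [if_neg hji, if_neg hji] at h5
            exact Fin.ext h5⟩ with hδ1
      have δval : ∀ (j : Fin m) (v : Fin (z.1.comp j)),
          (δ1 j v).val = if j = i then σ v.val else v.val := fun _ _ => rfl
      set δ : z ⟶ (addFG m G (Pi.single i 1)).obj ((z', z.2) : FImG m G) :=
        (δ1, (1 : G)) with hδ
      -- the factorization
      have hfact : β = δ ≫ (addFG m G (Pi.single i 1)).map γ := by
        refine Prod.ext ?_ ?_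
        · funext j
          refine DFunLike.ext _ _ fun v => Fin.ext ?_
          show (β.1 j v).val = (shiftEmb ((Pi.single i 1 : Fin m → ℕ) j) (γ1 j) (δ1 j v)).val
          by_cases hji : j = i
          · subst hji
            have hδv : (δ1 j v).val = σ v.val := by rw [δval, if_pos rfl]
            by_cases hlt : (δ1 j v).val < z'.comp j
            · rw [shiftEmb_val_lt (γ1 j) (δ1 j v) hlt, γ1val]
              have h13 : (fc j ⟨(δ1 j v).val, hlt⟩).val = v.val := by
                rw [fcval, if_pos rfl]
                show σ (δ1 j v).val = v.val
                rw [hδv, σinvol]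
              have h14 : fc j ⟨(δ1 j v).val, hlt⟩ = v := Fin.ext h13
              rw [h14]
            · rw [shiftEmb_val_ge (γ1 j) (δ1 j v) (by omega)]
              have h2 := v.isLt
              have h15 : σ v.val = z.1.comp j - 1 := by
                have h16 := σlt v.val h2
                omega
              have h18 : v.val = p.val := by
                rw [← σlast v.val h2]
                exact h15
              have h19 : v = p := Fin.ext h18
              have h22 : (β.1 j v).val = x.1.comp j := by rw [h19, hp]
              omega
          · have hδv : (δ1 j v).val = v.val := by rw [δval, if_neg hji]
            have hlt : (δ1 j v).val < z'.comp j := by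
              have h3 := hz'j j hji
              have h4 := v.isLt
              omega
            rw [shiftEmb_val_lt (γ1 j) (δ1 j v) hlt, γ1val]
            have h20 : fc j ⟨(δ1 j v).val, hlt⟩ = v := by
              refine Fin.ext ?_
              rw [fcval, if_neg hji]
              exact hδv
            rw [h20]
        · show β.2 = ((addFG m G (Pi.single i 1)).map γ).2 * (1 : G)
          rw [mul_one]
          rfl
      -- degree of γ
      have hdeg : degS m G S γ = degS m G S β := by
        refine Finset.sum_congr rfl fun j _ => ?_
        rw [addFG_obj_comp]
        show (x.1.comp j : ℤ) - (z'.comp j : ℤ) = _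
        rw [hz'c j]
        have hej : Pi.single (M := fun _ : Fin m => ℕ) i 1 j ≤ z.1.comp j := by
          by_cases hji : j = i
          · subst hji; rw [hsi]; exact hz
          · rw [hsj j hji]; omega
        rw [Nat.cast_sub hej]
        push_cast
        ring
      -- conclude
      rintro b ⟨v, rfl⟩
      have h21 : (V.map β).hom v
          = (V.map ((addFG m G (Pi.single i 1)).map γ)).hom ((V.map δ).hom v) := by
        rw [hfact, V.map_comp]
        rfl
      rw [h21]
      refine Submodule.mem_sup_right ?_
      have hmem : (((sigmaF m G k (Pi.single i 1)).obj V).map γ).hom ((V.map δ).hom v)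
          ∈ Jsub m G k S ((sigmaF m G k (Pi.single i 1)).obj V) x := by
        refine Submodule.mem_iSup_of_mem ((z', z.2) : FImG m G) ?_
        refine Submodule.mem_iSup_of_mem γ ?_
        refine Submodule.mem_iSup_of_mem ?_ ?_
        · rw [hdeg]; exact hβ
        · exact ⟨(V.map δ).hom v, rfl⟩
      exact hmem
    · -- case A : factor through incHom
      push_neg at hc
      have abnd : ∀ (j : Fin m) (v : Fin (z.1.comp j)), (β.1 j v).val < x.1.comp j := by
        intro j v
        have h7 := (β.1 j v).isLt
        have h8 := addFG_obj_comp m G (Pi.single i 1) x j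
        by_cases hji : j = i
        · subst hji
          have := hc v
          have := hsi
          omega
        · have := hsj j hji
          omega
      set γ1 : ∀ j : Fin m, Fin (z.1.comp j) ↪ Fin (x.1.comp j) := fun j =>
        ⟨fun v => ⟨(β.1 j v).val, abnd j v⟩, by
          intro a b hab
          have h5 := congrArg Fin.val hab
          simp only [] at h5
          exact (β.1 j).injective (Fin.ext h5)⟩ with hγ1
      set γ : z ⟶ x := (γ1, β.2) with hγ
      have hfact : β = γ ≫ incHom m G (Pi.single i 1) x := by
        refine Prod.ext ?_ ?_
        · funext j
          refine DFunLike.ext _ _ fun v => Fin.ext ?_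
          show (β.1 j v).val = (Fin.castAdd ((Pi.single i 1 : Fin m → ℕ) j) (γ1 j v)).val
          rw [Fin.coe_castAdd]
          rfl
        · show β.2 = (1 : G) * β.2
          rw [one_mul]
      rintro b ⟨v, rfl⟩
      have h21 : (V.map β).hom v = (V.map (incHom m G (Pi.single i 1) x)).hom ((V.map γ).hom v) := by
        rw [hfact, V.map_comp]
        rfl
      rw [h21]
      exact Submodule.mem_sup_left ⟨(V.map γ).hom v, rfl⟩
  · -- easy direction
    refine sup_le ?_ ?_
    · refine le_iSup_of_le x ?_
      refine le_iSup_of_le (incHom m G (Pi.single i 1) x) ?_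
      refine le_iSup_of_le ?_ le_rfl
      rw [degS_incHom m G S i hi x]
      omega
    · refine iSup_le fun y => iSup_le fun α => iSup_le fun hα => ?_
      refine le_iSup_of_le ((addFG m G (Pi.single i 1)).obj y) ?_
      refine le_iSup_of_le ((addFG m G (Pi.single i 1)).map α) ?_
      refine le_iSup_of_le ?_ ?_
      · rw [degS_addFG_map m G S _ α]; exact hα
      · rw [sigmaF_obj_map]
        exact le_rfl
end Aux2

open CategoryTheory Limits

section Aux3
variable (m : ℕ) (G : Type) [Group G] (k : Type) [Field k]

lemma dfun_jsub_top_iff (S : Finset (Fin m)) (i : Fin m) (hi : i ∈ S) (V : ModG m G k)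
    (x : FImG m G) :
    Jsub m G k S ((Dfun m G k (Pi.single i 1)).obj V) x = ⊤
      ↔ Jsub m G k S V ((addFG m G (Pi.single i 1)).obj x) = ⊤ := by
  set ψ := incMapV m G k (Pi.single i 1) V with hψ
  obtain ⟨hsurj, hker⟩ := cokernel_pi_app_spec m G k ψ x
  have h1 : Jsub m G k S ((Dfun m G k (Pi.single i 1)).obj V) x
      = Submodule.map ((cokernel.π ψ).app x).hom
          (Jsub m G k S ((sigmaF m G k (Pi.single i 1)).obj V) x) :=
    jsub_cokernel m G k S ψ x
  have heq : LinearMap.range (ψ.app x).hom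
      = LinearMap.range (V.map (incHom m G (Pi.single i 1) x)).hom := rfl
  show Jsub m G k S (cokernel ψ) x = ⊤ ↔ _
  rw [jsub_cokernel m G k S ψ x, LinearMap.map_eq_top_iff (LinearMap.range_eq_top.2 hsurj), hker, heq,
    jsub_shift m G k S i hi V x]
  exact ⟨fun h => (sup_comm _ _).trans h, fun h => (sup_comm _ _).trans h⟩

lemma jsub_biproduct_top_iff {J : Type} [Fintype J] [DecidableEq J] (S : Finset (Fin m))
    (f : J → ModG m G k) (x : FImG m G) :
    Jsub m G k S (⨁ f) x = ⊤ ↔ ∀ j, Jsub m G k S (f j) x = ⊤ := by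
  constructor
  · intro h j
    have hsplit : (biproduct.ι f j).app x ≫ (biproduct.π f j).app x
        = 𝟙 ((f j).obj x) := by
      rw [← NatTrans.comp_app, biproduct.ι_π_self, NatTrans.id_app]
    have hsurj : Function.Surjective ((biproduct.π f j).app x).hom := by
      intro w
      refine ⟨((biproduct.ι f j).app x).hom w, ?_⟩
      have := congrFun (congrArg (fun (t : (f j).obj x ⟶ (f j).obj x) => ⇑t.hom) hsplit) w
      exact this
    rw [eq_top_iff]
    rintro w -
    obtain ⟨u, rfl⟩ := hsurj w
    have hle := Jsub_le_comap_app m G k S (biproduct.π f j) x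
    have : u ∈ Jsub m G k S (⨁ f) x := h ▸ Submodule.mem_top
    exact hle this
  · intro h
    rw [eq_top_iff]
    rintro w -
    have htot := congr_app (biproduct.total (f := f)) x
    rw [NatTrans.app_sum, NatTrans.id_app] at htot
    have hw : w = ∑ j : J, ((biproduct.π f j ≫ biproduct.ι f j).app x).hom w := by
      have h2 := LinearMap.congr_fun (congrArg ModuleCat.Hom.hom htot) w
      rw [ModuleCat.hom_sum, LinearMap.sum_apply] at h2
      exact h2.symm
    rw [hw]
    refine Submodule.sum_mem _ fun j _ => ?_
    have hle := Jsub_le_comap_app m G k S (biproduct.ι f j) x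
    have hmem : ((biproduct.π f j).app x).hom w ∈ Jsub m G k S (f j) x :=
      (h j) ▸ Submodule.mem_top
    have := hle hmem
    rw [NatTrans.comp_app]
    exact this

end Aux3

open CategoryTheory Limits

section Aux4
variable (m : ℕ) (G : Type) [Group G] (k : Type) [Field k]

lemma nontrivial_of_iso {M N : ModuleCat.{0} k} (e : M ≅ N) :
    Nontrivial M ↔ Nontrivial N := by
  have hinj : Function.Injective e.hom := by
    rw [← ModuleCat.mono_iff_injective]; infer_instance
  have hinj' : Function.Injective e.inv := by
    rw [← ModuleCat.mono_iff_injective]; infer_instance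
  constructor
  · rintro ⟨a, b, hab⟩
    exact ⟨e.hom a, e.hom b, fun hc => hab (hinj hc)⟩
  · rintro ⟨a, b, hab⟩
    exact ⟨e.inv a, e.inv b, fun hc => hab (hinj' hc)⟩

lemma h0s_map_app (S : Finset (Fin m)) {V W : ModG m G k} (φ : V ⟶ W) (x : FImG m G)
    (v : V.obj x) :
    (((H0S m G k S).map φ).app x).hom (Submodule.Quotient.mk v)
      = Submodule.Quotient.mk ((φ.app x).hom v) := rfl

lemma isIso_h0s_cokernelComparison (S : Finset (Fin m)) {V W : ModG m G k} (φ : V ⟶ W) :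
    IsIso (cokernelComparison φ (H0S m G k S)) := by
  have happ : ∀ x : FImG m G, IsIso ((cokernelComparison φ (H0S m G k S)).app x) := by
    intro x
    set c := (cokernelComparison φ (H0S m G k S)).app x with hc
    obtain ⟨hp'surj, hp'ker⟩ := cokernel_pi_app_spec m G k ((H0S m G k S).map φ) x
    obtain ⟨hpsurj, hpker⟩ := cokernel_pi_app_spec m G k φ x
    have hcomp : ∀ a, c.hom (((cokernel.π ((H0S m G k S).map φ)).app x).hom a)
        = (((H0S m G k S).map (cokernel.π φ)).app x).hom a := by
      intro a
      have h0 : (cokernel.π ((H0S m G k S).map φ)).app x ≫ c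
          = ((H0S m G k S).map (cokernel.π φ)).app x := by
        rw [hc, ← NatTrans.comp_app, π_comp_cokernelComparison]
      exact congrFun (congrArg (fun (t : ((H0S m G k S).obj W).obj x ⟶ ((H0S m G k S).obj (cokernel φ)).obj x) => ⇑t.hom) h0) a
    have hsurj : Function.Surjective c.hom := by
      intro b
      obtain ⟨u, rfl⟩ := (Jsub m G k S (cokernel φ) x).mkQ_surjective b
      obtain ⟨w, rfl⟩ := hpsurj u
      exact ⟨((cokernel.π ((H0S m G k S).map φ)).app x).hom (Submodule.Quotient.mk w),
        (hcomp _).trans rfl⟩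
    have hzero : ∀ a, c.hom a = 0 → a = 0 := by
      intro a ha
      obtain ⟨b, rfl⟩ := hp'surj a
      obtain ⟨w, rfl⟩ := (Jsub m G k S W x).mkQ_surjective b
      have h1 : (((H0S m G k S).map (cokernel.π φ)).app x).hom (Submodule.Quotient.mk w) = 0 := by
        exact (hcomp _).symm.trans ha
      have h2 : Submodule.Quotient.mk (((cokernel.π φ).app x).hom w)
          = (0 : (cokernel φ).obj x ⧸ Jsub m G k S (cokernel φ) x) := h1
      rw [Submodule.Quotient.mk_eq_zero] at h2
      rw [jsub_cokernel m G k S φ x] at h2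
      obtain ⟨u, hu, huw⟩ := h2
      have h3 : w - u ∈ LinearMap.ker ((cokernel.π φ).app x).hom := by
        rw [LinearMap.mem_ker, map_sub, huw, sub_self]
      rw [hpker] at h3
      obtain ⟨v, hv⟩ := h3
      have h4 : (Jsub m G k S W x).mkQ w
          = (((H0S m G k S).map φ).app x).hom (Submodule.Quotient.mk v) := by
        show (Submodule.Quotient.mk w : W.obj x ⧸ Jsub m G k S W x) = _
        rw [h0s_map_app, hv]
        refine (Submodule.Quotient.eq _).2 ?_
        simpa using hu
      rw [h4]
      have h5 : (((H0S m G k S).map φ).app x).hom (Submodule.Quotient.mk v)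
          ∈ LinearMap.ker ((cokernel.π ((H0S m G k S).map φ)).app x).hom := by
        rw [hp'ker]
        exact ⟨Submodule.Quotient.mk v, rfl⟩
      rw [LinearMap.mem_ker] at h5
      exact h5
    have hinj : Function.Injective c.hom := by
      intro a b hab
      have := hzero (a - b) (by rw [map_sub, hab, sub_self])
      exact sub_eq_zero.1 this
    have : Mono c := (ModuleCat.mono_iff_injective c).2 hinj
    have : Epi c := (ModuleCat.epi_iff_surjective c).2 hsurj
    exact isIso_of_mono_of_epi c
  exact NatIso.isIso_of_isIso_app _

instance h0s_preservesCokernel (S : Finset (Fin m)) {V W : ModG m G k} (φ : V ⟶ W) :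
    PreservesColimit (parallelPair φ 0) (H0S m G k S) := by
  have := isIso_h0s_cokernelComparison m G k S φ
  exact PreservesCokernel.of_iso_comparison _ _

instance h0s_preservesFiniteColimits (S : Finset (Fin m)) :
    PreservesFiniteColimits (H0S m G k S) :=
  Functor.preservesFiniteColimits_of_preservesCokernels _

-- transfer of pointwise nontriviality from the derived functor to H0S
lemma hiS_nontrivial_iff (S : Finset (Fin m)) (W : ModG m G k) (x : FImG m G) :
    Nontrivial (((HiS m G k S 0).obj W).obj x) ↔ Jsub m G k S W x ≠ ⊤ := by
  have e : (HiS m G k S 0).obj W ≅ (H0S m G k S).obj W :=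
    (Functor.leftDerivedZeroIsoSelf (H0S m G k S)).app W
  have e' := ((evaluation (FImG m G) (ModuleCat.{0} k)).obj x).mapIso e
  exact Iff.trans (nontrivial_of_iso k e') (h0s_nontrivial_iff m G k S W x)

end Aux4

open CategoryTheory Limits

section Aux5
variable (m : ℕ) (G : Type) [Group G] (k : Type) [Field k]

-- the degree-set description of tS
lemma tS_eq (S : Finset (Fin m)) (W : ModG m G k) :
    tS m G k S 0 W = sSup ((fun n : ℕ => ((n : ℕ∞) : WithBot ℕ∞)) ''
      {n : ℕ | ∃ x : FImG m G, (∑ j ∈ S, x.1.comp j) = n ∧ Jsub m G k S W x ≠ ⊤}) := by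
  rw [tS]
  congr 1
  ext v
  constructor
  · rintro ⟨s, hs, rfl⟩
    obtain ⟨x, hmatch, hnt⟩ := hs
    refine ⟨∑ j ∈ S, x.1.comp j, ⟨x, rfl, (hiS_nontrivial_iff m G k S W x).1 hnt⟩, ?_⟩
    have : ∑ j ∈ S, x.1.comp j = ∑ j ∈ S, s j :=
      Finset.sum_congr rfl fun j hj => hmatch j hj
    rw [this]
  · rintro ⟨n, ⟨x, hsum, hne⟩, rfl⟩
    refine ⟨x.1.comp, ⟨x, fun j _ => rfl, (hiS_nontrivial_iff m G k S W x).2 hne⟩, ?_⟩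
    simp only []
    rw [hsum]

lemma sum_addFG_single (S : Finset (Fin m)) (i : Fin m) (hi : i ∈ S) (x : FImG m G) :
    ∑ j ∈ S, ((addFG m G (Pi.single i 1)).obj x).1.comp j
      = (∑ j ∈ S, x.1.comp j) + 1 := by
  have h1 : ∀ j ∈ S, ((addFG m G (Pi.single i 1)).obj x).1.comp j
      = x.1.comp j + (Pi.single i 1 : Fin m → ℕ) j := fun j _ => addFG_obj_comp m G _ x j
  rw [Finset.sum_congr rfl h1, Finset.sum_add_distrib]
  congr 1
  rw [Finset.sum_eq_single_of_mem i hi fun j _ hj => Pi.single_eq_of_ne hj 1]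
  exact Pi.single_eq_same i 1

-- nontrivial Jsub for DS V
lemma jsub_DS_iff (S : Finset (Fin m)) (V : ModG m G k) (x : FImG m G) :
    Jsub m G k S ((DSfun m G k S).obj V) x ≠ ⊤
      ↔ ∃ i : Fin m, ∃ _ : i ∈ S,
          Jsub m G k S V ((addFG m G (Pi.single i 1)).obj x) ≠ ⊤ := by
  classical
  have h1 := jsub_biproduct_top_iff m G k S
    (fun i : {i // i ∈ S} => (Dfun m G k (Pi.single i.1 1)).obj V) x
  constructor
  · intro h
    have h2 : ¬ ∀ j : {i // i ∈ S},
        Jsub m G k S ((Dfun m G k (Pi.single j.1 1)).obj V) x = ⊤ := fun hall => h (h1.2 hall)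
    push_neg at h2
    obtain ⟨j, hj⟩ := h2
    exact ⟨j.1, j.2, fun hc => hj ((dfun_jsub_top_iff m G k S j.1 j.2 V x).2 hc)⟩
  · rintro ⟨i, hiS, hne⟩ h
    have h3 := h1.1 h ⟨i, hiS⟩
    exact hne ((dfun_jsub_top_iff m G k S i hiS V x).1 h3)

-- existence of a nonvanishing slice for nonzero V
lemma exists_jsub_ne_top (S : Finset (Fin m)) (V : ModG m G k) (hne : ¬ IsZero V) :
    ∃ x : FImG m G, Jsub m G k S V x ≠ ⊤ := by
  classical
  have h1 : ∃ x : FImG m G, Nontrivial (V.obj x) := by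
    by_contra hcon
    push_neg at hcon
    refine hne (V.isZero_iff.2 fun x => ?_)
    have : Subsingleton (V.obj x) := hcon x
    exact ModuleCat.isZero_of_subsingleton _
  obtain ⟨x0, hx0⟩ := h1
  set P : ℕ → Prop := fun n => ∃ x : FImG m G, (∑ j ∈ S, x.1.comp j) = n
      ∧ Nontrivial (V.obj x) with hP
  have hex : ∃ n, P n := ⟨∑ j ∈ S, x0.1.comp j, x0, rfl, hx0⟩
  obtain ⟨x, hxsum, hxnt⟩ := Nat.find_spec hex
  refine ⟨x, fun htop => ?_⟩
  have hJbot : Jsub m G k S V x ≤ ⊥ := by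
    refine iSup_le fun y => iSup_le fun α => iSup_le fun hα => ?_
    have hysum : ∑ j ∈ S, y.1.comp j < ∑ j ∈ S, x.1.comp j := by
      have hd := hα
      rw [degS, Finset.sum_sub_distrib] at hd
      have h5 : (∑ j ∈ S, (y.1.comp j : ℤ)) < ∑ j ∈ S, (x.1.comp j : ℤ) := by omega
      have h6 : ((∑ j ∈ S, y.1.comp j : ℕ) : ℤ) < ((∑ j ∈ S, x.1.comp j : ℕ) : ℤ) := by
        push_cast
        exact h5
      exact_mod_cast h6
    have hnt : ¬ P (∑ j ∈ S, y.1.comp j) := Nat.find_min hex (by omega)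
    have hsub : Subsingleton (V.obj y) := by
      rw [← not_nontrivial_iff_subsingleton]
      exact fun hnty => hnt ⟨y, rfl, hnty⟩
    rintro b ⟨v, rfl⟩
    have : v = 0 := Subsingleton.elim v 0
    rw [this, map_zero]
    exact Submodule.zero_mem ⊥
  obtain ⟨a, b, hab⟩ := hxnt
  have ha : a ∈ Jsub m G k S V x := htop ▸ Submodule.mem_top
  have hb : b ∈ Jsub m G k S V x := htop ▸ Submodule.mem_top
  have ha0 : a = 0 := by simpa using hJbot ha
  have hb0 : b = 0 := by simpa using hJbot hb
  exact hab (ha0.trans hb0.symm)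

-- arithmetic of suprema
lemma sup_arith (A : Set ℕ) (hA : A.Nonempty) (ha : ∃ a ∈ A, 0 < a) :
    sSup ((fun n : ℕ => ((n : ℕ∞) : WithBot ℕ∞)) '' A)
      = sSup ((fun n : ℕ => ((n : ℕ∞) : WithBot ℕ∞)) '' {n : ℕ | n + 1 ∈ A}) + 1 := by
  set c : ℕ → WithBot ℕ∞ := fun n => ((n : ℕ∞) : WithBot ℕ∞) with hcdef
  have hcmono : ∀ {s t : ℕ}, s ≤ t → c s ≤ c t := by
    intro s t hst
    show ((s : ℕ∞) : WithBot ℕ∞) ≤ ((t : ℕ∞) : WithBot ℕ∞)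
    exact_mod_cast hst
  have hcle : ∀ {s t : ℕ}, c s ≤ c t → s ≤ t := by
    intro s t hst
    have hst' : ((s : ℕ∞) : WithBot ℕ∞) ≤ ((t : ℕ∞) : WithBot ℕ∞) := hst
    exact_mod_cast hst'
  have hadd : ∀ n : ℕ, c (n + 1) = c n + 1 := by
    intro n
    show (((n + 1 : ℕ) : ℕ∞) : WithBot ℕ∞) = ((n : ℕ∞) : WithBot ℕ∞) + 1
    push_cast
    rfl
  have h01 : (0 : WithBot ℕ∞) ≤ 1 := by
    exact_mod_cast (zero_le_one : (0 : ℕ∞) ≤ 1)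
  have hle_top : ∀ w : WithBot ℕ∞, w ≤ (((⊤ : ℕ∞)) : WithBot ℕ∞) := by
    intro w
    cases w with
    | bot => exact bot_le
    | coe y => exact WithBot.coe_le_coe.2 le_top
  obtain ⟨a₀, ha₀A, ha₀⟩ := ha
  set B : Set ℕ := {n : ℕ | n + 1 ∈ A} with hBdef
  have hBne : B.Nonempty := by
    refine ⟨a₀ - 1, ?_⟩
    show a₀ - 1 + 1 ∈ A
    have h7 : a₀ - 1 + 1 = a₀ := by omega
    rw [h7]
    exact ha₀A
  apply le_antisymm
  · refine sSup_le ?_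
    rintro v ⟨a, haA, rfl⟩
    rcases Nat.eq_zero_or_pos a with h0 | hpos
    · subst h0
      obtain ⟨b₀, hb₀⟩ := hBne
      calc c 0 ≤ c b₀ := hcmono (Nat.zero_le _)
        _ ≤ sSup (c '' B) := le_sSup (Set.mem_image_of_mem c hb₀)
        _ ≤ sSup (c '' B) + 1 := le_add_of_nonneg_right h01
    · have hb : a - 1 ∈ B := by
        simp only [hBdef, Set.mem_setOf_eq]
        have : a - 1 + 1 = a := by omega
        rw [this]; exact haA
      have : c a = c (a - 1) + 1 := by
        rw [← hadd]
        congr 1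
        omega
      rw [this]
      exact add_le_add_left (le_sSup (Set.mem_image_of_mem c hb)) 1
  · have hub : ∀ a ∈ A, c a ≤ sSup (c '' A) := fun a haA => le_sSup (Set.mem_image_of_mem c haA)
    have hSAne : sSup (c '' A) ≠ ⊥ := by
      intro hcon
      have h8 := hub a₀ ha₀A
      rw [hcon, le_bot_iff] at h8
      exact WithBot.coe_ne_bot h8
    obtain ⟨sa, hsa⟩ := WithBot.ne_bot_iff_exists.1 hSAne
    by_cases hsatop : sa = ⊤
    · rw [← hsa, hsatop]
      exact hle_top _
    · obtain ⟨n, hn⟩ := WithTop.ne_top_iff_exists.1 hsatop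
      have hAn : ∀ a ∈ A, a ≤ n := by
        intro a haA
        have h9 := hub a haA
        rw [← hsa, ← hn] at h9
        exact hcle h9
      have hn1 : 1 ≤ n := le_trans ha₀ (hAn a₀ ha₀A)
      have hBn : ∀ b ∈ B, b ≤ n - 1 := by
        intro b hb
        have := hAn (b + 1) hb
        omega
      have hSB : sSup (c '' B) ≤ c (n - 1) := by
        refine sSup_le ?_
        rintro v ⟨b, hbB, rfl⟩
        exact hcmono (hBn b hbB)
      rw [← hsa, ← hn]
      calc sSup (c '' B) + 1 ≤ c (n - 1) + 1 := add_le_add_left hSB 1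
        _ = c (n - 1 + 1) := (hadd _).symm
        _ = c n := by congr 1; omega
        _ = _ := rfl

end Aux5

section Statements

open CategoryTheory Limits

theorem FIm.t0_of_derivative (m : ℕ) (hm : 0 < m) (G : Type) [Group G] [Finite G]
    (k : Type) [Field k] [CharZero k] (S : Finset (Fin m)) (hS : S.Nonempty)
    (V : ModG m G k) (hV : FinitelyGenerated m G k V) (hne : ¬ IsZero V) :
    tS m G k S 0 V = tS m G k S 0 ((DSfun m G k S).obj V) + 1
    ∨ (tS m G k S 0 ((DSfun m G k S).obj V) = ⊥ ∧ tS m G k S 0 V = 0) := by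
  classical
  have hAD : {n : ℕ | ∃ x : FImG m G, (∑ j ∈ S, x.1.comp j) = n
        ∧ Jsub m G k S ((DSfun m G k S).obj V) x ≠ ⊤}
      = {n : ℕ | n + 1 ∈ {n : ℕ | ∃ x : FImG m G, (∑ j ∈ S, x.1.comp j) = n
        ∧ Jsub m G k S V x ≠ ⊤}} := by
    ext n
    simp only [Set.mem_setOf_eq]
    constructor
    · rintro ⟨x, hsum, hnet⟩
      obtain ⟨i, hiS, hne'⟩ := (jsub_DS_iff m G k S V x).1 hnet
      refine ⟨(addFG m G (Pi.single i 1)).obj x, ?_, hne'⟩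
      rw [sum_addFG_single m G S i hiS x, hsum]
    · rintro ⟨x', hsum', hne'⟩
      have hex : ∃ i ∈ S, x'.1.comp i ≠ 0 := by
        by_contra hall
        push_neg at hall
        rw [Finset.sum_eq_zero hall] at hsum'
        omega
      obtain ⟨i, hiS, hi0⟩ := hex
      set x : FImG m G :=
        ((⟨Function.update x'.1.comp i (x'.1.comp i - 1)⟩ : FImObj m), x'.2) with hx
      have hobj : (addFG m G (Pi.single i 1)).obj x = x' := by
        refine Prod.ext ?_ rfl
        refine FImObj.ext ?_
        funext j
        show Function.update x'.1.comp i (x'.1.comp i - 1) j + (Pi.single i 1 : Fin m → ℕ) j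
          = x'.1.comp j
        by_cases hji : j = i
        · subst hji
          rw [Function.update_self, Pi.single_eq_same]
          omega
        · rw [Function.update_of_ne hji, Pi.single_eq_of_ne hji]
          omega
      refine ⟨x, ?_, ?_⟩
      · have hs := sum_addFG_single m G S i hiS x
        rw [hobj] at hs
        omega
      · rw [jsub_DS_iff]
        exact ⟨i, hiS, by rw [hobj]; exact hne'⟩
  obtain ⟨xm, hxm⟩ := exists_jsub_ne_top m G k S V hne
  have hAne : Set.Nonempty {n : ℕ | ∃ x : FImG m G, (∑ j ∈ S, x.1.comp j) = n
      ∧ Jsub m G k S V x ≠ ⊤} := ⟨∑ j ∈ S, xm.1.comp j, xm, rfl, hxm⟩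
  rw [tS_eq m G k S V, tS_eq m G k S ((DSfun m G k S).obj V), hAD]
  by_cases hpos : ∃ a ∈ {n : ℕ | ∃ x : FImG m G, (∑ j ∈ S, x.1.comp j) = n
      ∧ Jsub m G k S V x ≠ ⊤}, 0 < a
  · left
    exact sup_arith _ hAne hpos
  · right
    push_neg at hpos
    have hA0 : {n : ℕ | ∃ x : FImG m G, (∑ j ∈ S, x.1.comp j) = n
        ∧ Jsub m G k S V x ≠ ⊤} = {0} := by
      apply subset_antisymm
      · intro a ha
        have := hpos a ha
        simp only [Set.mem_singleton_iff]
        omega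
      · intro a ha
        rw [Set.mem_singleton_iff] at ha
        subst ha
        obtain ⟨a₁, ha₁⟩ := hAne
        have := hpos a₁ ha₁
        have ha₁0 : a₁ = 0 := by omega
        rw [← ha₁0]
        exact ha₁
    constructor
    · have hB : {n : ℕ | n + 1 ∈ {n : ℕ | ∃ x : FImG m G, (∑ j ∈ S, x.1.comp j) = n
          ∧ Jsub m G k S V x ≠ ⊤}} = ∅ := by
        ext n
        simp only [hA0, Set.mem_setOf_eq, Set.mem_singleton_iff, Set.mem_empty_iff_false,
          iff_false]
        omega
      rw [hB, Set.image_empty, sSup_empty]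
    · rw [hA0, Set.image_singleton, sSup_singleton]
      norm_cast

end Statements
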